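/- Joint distribution of k parallel Bell measurements: let α be a finite type, k ∈ ℕ, and Ψ : α × (Fin k → Fin 2) → ℂ. Attach k fresh EPR pairs (r₁ᵢ, r₂ᵢ) and apply B† to each pair (qᵢ, r₁ᵢ); call the result Φ. Then for every tuple of outcomes m : Fin k → Fin 2 × Fin 2, the total probability of observing m on the k pairs (qᵢ, r₁ᵢ) equals 4^{−k}·∑|Ψ|². In particular, the k Bell measurement results are mutually independent and each outcome occurs with probability exactly 1/4, independent of Ψ. -/
import Mathlib


open Matrix Kronecker

noncomputable def Hgate : Matrix (Fin 2) (Fin 2) ℂ :=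
  ((1 / Real.sqrt 2 : ℝ) : ℂ) • !![1, 1; 1, -1]

/-- The CNOT gate: `CNOT(|a⟩⊗|b⟩) = |a⟩⊗|a⊕b⟩`. -/
def CNOT : Matrix (Fin 2 × Fin 2) (Fin 2 × Fin 2) ℂ :=
  fun p q => if p = (q.1, q.1 + q.2) then 1 else 0

/-- The Bell gate `B = CNOT * (H ⊗ I₂)`. -/
noncomputable def Bgate : Matrix (Fin 2 × Fin 2) (Fin 2 × Fin 2) ℂ :=
  CNOT * (Hgate ⊗ₖ (1 : Matrix (Fin 2) (Fin 2) ℂ))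

/-- `B†`, the conjugate transpose of the Bell gate. -/
noncomputable def Bdag : Matrix (Fin 2 × Fin 2) (Fin 2 × Fin 2) ℂ := Bgateᴴ

/-- The computational basis state `|a⟩` of one qubit. -/
def ket (a : Fin 2) : Fin 2 → ℂ := fun i => if i = a then 1 else 0

/-- The EPR state `B(|0⟩⊗|0⟩) = (|00⟩+|11⟩)/√2`. -/
noncomputable def EPR : Fin 2 × Fin 2 → ℂ :=
  Bgate.mulVec fun p => ket 0 p.1 * ket 0 p.2

/-- The state obtained from `Ψ ⊗ EPR^{⊗k}` (the `i`-th EPR pair occupying fresh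
qubits `r₁ᵢ, r₂ᵢ`) by applying `B†` to each pair `(qᵢ, r₁ᵢ)` and the identity
elsewhere.  Coordinates are `(a, q, r₁, r₂)`. -/
noncomputable def parallelTeleported {α : Type*} [Fintype α] (k : ℕ)
    (Ψ : α × (Fin k → Fin 2) → ℂ) :
    α × (Fin k → Fin 2) × (Fin k → Fin 2) × (Fin k → Fin 2) → ℂ :=
  fun x => ∑ q' : Fin k → Fin 2, ∑ r' : Fin k → Fin 2,
    (∏ i, Bdag (x.2.1 i, x.2.2.1 i) (q' i, r' i)) *
      (Ψ (x.1, q') * ∏ i, EPR (r' i, x.2.2.2 i))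

/-- Joint distribution of `k` parallel Bell measurements: every tuple of outcomes
`m : Fin k → Fin 2 × Fin 2` on the `k` pairs `(qᵢ, r₁ᵢ)` occurs with total
probability `4^{−k}·∑|Ψ|²`; in particular the `k` Bell measurement results are
mutually independent and uniform, independently of `Ψ`. -/
lemma EPR_eq (x y : Fin 2) : EPR (x, y) = if x = y then (((Real.sqrt 2)⁻¹ : ℝ) : ℂ) else 0 := by
  fin_cases x <;> fin_cases y <;>
    simp [EPR, Bgate, CNOT, Hgate, ket, mulVec, dotProduct, mul_apply,
      Fintype.sum_prod_type, Fin.sum_univ_two, Matrix.one_apply, Prod.ext_iff]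

lemma Bdag_eq (a b q r : Fin 2) :
    Bdag (a, b) (q, r) = (if r = q + b then 1 else 0) * Hgate q a := by
  fin_cases a <;> fin_cases b <;> fin_cases q <;> fin_cases r <;>
    simp [Bdag, Bgate, CNOT, Hgate, conjTranspose_apply, mul_apply,
      Fintype.sum_prod_type, Fin.sum_univ_two, Matrix.one_apply, Prod.ext_iff]

lemma Hnorm (q a : Fin 2) : ‖Hgate q a‖ = (Real.sqrt 2)⁻¹ := by
  fin_cases q <;> fin_cases a <;> simp [Hgate]

lemma innerSumB (u v y z : Fin 2) :
    ∑ x : Fin 2, Bdag (u, v) (y, x) * EPR (x, z)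
      = (if y = z + v then 1 else 0) * (Hgate y u * (((Real.sqrt 2)⁻¹ : ℝ) : ℂ)) := by
  simp only [Bdag_eq, EPR_eq, Fin.sum_univ_two]
  fin_cases v <;> fin_cases y <;> fin_cases z <;> simp <;> ring

lemma amp {α : Type*} [Fintype α] (k : ℕ) (Ψ : α × (Fin k → Fin 2) → ℂ)
    (m : Fin k → Fin 2 × Fin 2) (a : α) (w : Fin k → Fin 2) :
    parallelTeleported k Ψ (a, fun i => (m i).1, fun i => (m i).2, w)
      = Ψ (a, fun i => w i + (m i).2) *
          ∏ i, (Hgate (w i + (m i).2) ((m i).1) * (((Real.sqrt 2)⁻¹ : ℝ) : ℂ)) := by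
  unfold parallelTeleported
  simp only
  have step1 : ∀ q' : Fin k → Fin 2,
      ∑ r' : Fin k → Fin 2, (∏ i, Bdag ((m i).1, (m i).2) (q' i, r' i)) *
          (Ψ (a, q') * ∏ i, EPR (r' i, w i))
        = Ψ (a, q') * ∏ i, ∑ x : Fin 2, Bdag ((m i).1, (m i).2) (q' i, x) * EPR (x, w i) := by
    intro q'
    calc ∑ r' : Fin k → Fin 2, (∏ i, Bdag ((m i).1, (m i).2) (q' i, r' i)) *
            (Ψ (a, q') * ∏ i, EPR (r' i, w i))
        = ∑ r' : Fin k → Fin 2, Ψ (a, q') *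
            ∏ i, Bdag ((m i).1, (m i).2) (q' i, r' i) * EPR (r' i, w i) := by
          refine Finset.sum_congr rfl fun r' _ => ?_
          rw [Finset.prod_mul_distrib]; ring
      _ = Ψ (a, q') * ∑ r' : Fin k → Fin 2,
            ∏ i, Bdag ((m i).1, (m i).2) (q' i, r' i) * EPR (r' i, w i) := by
          rw [Finset.mul_sum]
      _ = Ψ (a, q') * ∏ i, ∑ x : Fin 2, Bdag ((m i).1, (m i).2) (q' i, x) * EPR (x, w i) := by
          rw [Fintype.prod_sum (fun i x => Bdag ((m i).1, (m i).2) (q' i, x) * EPR (x, w i))]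
  simp only [step1, innerSumB]
  have step2 : ∀ q' : Fin k → Fin 2,
      Ψ (a, q') * ∏ i, ((if q' i = w i + (m i).2 then 1 else 0) *
          (Hgate (q' i) ((m i).1) * (((Real.sqrt 2)⁻¹ : ℝ) : ℂ)))
        = if q' = (fun i => w i + (m i).2) then
            Ψ (a, fun i => w i + (m i).2) *
              ∏ i, (Hgate (w i + (m i).2) ((m i).1) * (((Real.sqrt 2)⁻¹ : ℝ) : ℂ)) else 0 := by
    intro q'
    by_cases h : q' = fun i => w i + (m i).2
    · subst h; simp
    · obtain ⟨i, hi⟩ := Function.ne_iff.mp h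
      rw [if_neg h, Finset.prod_eq_zero (Finset.mem_univ i) (by simp [hi]), mul_zero]
  simp only [step2]
  simp

theorem parallel_bell_measurement_prob {α : Type*} [Fintype α] (k : ℕ)
    (Ψ : α × (Fin k → Fin 2) → ℂ) (m : Fin k → Fin 2 × Fin 2) :
    ∑ a : α, ∑ w : Fin k → Fin 2,
        ‖parallelTeleported k Ψ (a, fun i => (m i).1, fun i => (m i).2, w)‖ ^ 2
      = ((4 : ℝ) ^ k)⁻¹ * ∑ a : α, ∑ c : Fin k → Fin 2, ‖Ψ (a, c)‖ ^ 2 := by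
  have hnorm : ∀ (a : α) (w : Fin k → Fin 2),
      ‖parallelTeleported k Ψ (a, fun i => (m i).1, fun i => (m i).2, w)‖ ^ 2
        = ((4 : ℝ) ^ k)⁻¹ * ‖Ψ (a, fun i => w i + (m i).2)‖ ^ 2 := by
    intro a w
    rw [amp, norm_mul, mul_pow, norm_prod]
    have he : ∀ i : Fin k,
        ‖Hgate (w i + (m i).2) ((m i).1) * (((Real.sqrt 2)⁻¹ : ℝ) : ℂ)‖ = (2 : ℝ)⁻¹ := by
      intro i
      rw [norm_mul, Hnorm, Complex.norm_real, Real.norm_eq_abs,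
        abs_of_nonneg (by positivity), ← mul_inv, Real.mul_self_sqrt (by norm_num)]
    rw [Finset.prod_congr rfl (fun i _ => he i), Finset.prod_const, Finset.card_univ,
      Fintype.card_fin]
    have h4 : (((2 : ℝ)⁻¹) ^ k) ^ 2 = ((4 : ℝ) ^ k)⁻¹ := by
      rw [← pow_mul, ← inv_pow, show (4 : ℝ)⁻¹ = 2⁻¹ ^ 2 by norm_num, ← pow_mul,
        mul_comm]
    rw [h4]; ring
  simp only [hnorm]
  rw [Finset.mul_sum]
  refine Finset.sum_congr rfl fun a _ => ?_
  rw [Finset.mul_sum]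
  have hinv : Function.Involutive (fun (w : Fin k → Fin 2) => fun i => w i + (m i).2) := by
    intro w
    funext i
    have : ∀ x y : Fin 2, x + y + y = x := by decide
    exact this _ _
  exact Fintype.sum_bijective _ hinv.bijective _ _ (fun w => rfl)
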